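/- Let k >= 3 and e >= 3. If there exists a strongly equitable uniquely (k-1)-chromatic e-star system of order n_{k-1} ≡ 0 (mod 2e) whose k-1 colour classes each have size r > e, then there exists a strongly equitable k-chromatic e-star system of order k·n_{k-1}, with each colour class of size (k-1)r. -/

import Mathlib

structure EStar (n e : ℕ) where
  centre : Fin n
  leaves : Finset (Fin n)
  card_leaves : leaves.card = e
  centre_not_leaf : centre ∉ leaves

instance {n e : ℕ} : DecidableEq (EStar n e) := fun a b =>
  decidable_of_iff (a.centre = b.centre ∧ a.leaves = b.leaves)
    (by cases a; cases b; simp)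

/-- The edge set of an `e`-star: all edges joining the centre to a leaf. -/
def EStar.edges {n e : ℕ} (S : EStar n e) : Finset (Sym2 (Fin n)) :=
  S.leaves.image (fun a => s(S.centre, a))

/-- The vertex set of an `e`-star. -/
def EStar.verts {n e : ℕ} (S : EStar n e) : Finset (Fin n) :=
  insert S.centre S.leaves

/-- An `e`-star system of order `n`: a collection of `e`-stars whose edge sets
partition the edge set of the complete graph `K_n`. -/
structure EStarSystem (n e : ℕ) where
  stars : Finset (EStar n e)
  partition : ∀ p : Sym2 (Fin n), ¬ p.IsDiag →
    ∃! S, S ∈ stars ∧ p ∈ EStar.edges S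

/-- A weak colouring: no star of the system has all of its vertices one colour. -/
def IsWeakColouring {n e k : ℕ} (sys : EStarSystem n e) (c : Fin n → Fin k) : Prop :=
  ∀ S ∈ sys.stars, ∃ a ∈ S.leaves, c a ≠ c S.centre

def Colourable {n e : ℕ} (sys : EStarSystem n e) (k : ℕ) : Prop :=
  ∃ c : Fin n → Fin k, IsWeakColouring sys c

def Chromatic {n e : ℕ} (sys : EStarSystem n e) (k : ℕ) : Prop :=
  Colourable sys k ∧ ¬ Colourable sys (k - 1)

/-- The size of the colour class of colour `i`. -/
def classCard {n k : ℕ} (c : Fin n → Fin k) (i : Fin k) : ℕ :=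
  (Finset.univ.filter (fun v => c v = i)).card

def UniquelyColourable {n e : ℕ} (sys : EStarSystem n e) (k : ℕ) : Prop :=
  ∀ c₁ c₂ : Fin n → Fin k, IsWeakColouring sys c₁ → IsWeakColouring sys c₂ →
    ∃ π : Equiv.Perm (Fin k), c₂ = π ∘ c₁


open Finset

section Aux

variable {m : ℕ}

/-- rank of an element in a finset of `Fin m`. -/
noncomputable def rnk (s : Finset (Fin m)) (x : Fin m) : ℕ :=
  if hx : x ∈ s then ((s.orderIsoOfFin rfl).symm ⟨x, hx⟩ : ℕ) else 0

lemma rnk_lt {s : Finset (Fin m)} {x : Fin m} (hx : x ∈ s) : rnk s x < s.card := by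
  simp only [rnk, dif_pos hx]
  exact ((s.orderIsoOfFin rfl).symm ⟨x, hx⟩).isLt

lemma rnk_inj {s : Finset (Fin m)} {x y : Fin m} (hx : x ∈ s) (hy : y ∈ s)
    (h : rnk s x = rnk s y) : x = y := by
  simp only [rnk, dif_pos hx, dif_pos hy] at h
  have := (s.orderIsoOfFin rfl).symm.injective (Fin.val_injective h)
  exact Subtype.ext_iff.mp this

lemma rnk_surj {s : Finset (Fin m)} {t : ℕ} (ht : t < s.card) :
    ∃ x, ∃ hx : x ∈ s, rnk s x = t := by
  refine ⟨(s.orderIsoOfFin rfl ⟨t, ht⟩ : s), (s.orderIsoOfFin rfl ⟨t, ht⟩).2, ?_⟩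
  simp only [rnk, dif_pos (s.orderIsoOfFin rfl ⟨t, ht⟩).2]
  have : (⟨((s.orderIsoOfFin rfl ⟨t, ht⟩ : s) : Fin m), (s.orderIsoOfFin rfl ⟨t, ht⟩).2⟩ : s)
      = s.orderIsoOfFin rfl ⟨t, ht⟩ := Subtype.ext rfl
  rw [this, OrderIso.symm_apply_apply]

lemma card_rnk_fiber (s : Finset (Fin m)) {e q : ℕ} (he : 0 < e)
    (h : (q + 1) * e ≤ s.card) :
    (s.filter (fun x => rnk s x / e = q)).card = e := by
  rw [add_mul, one_mul] at h
  have : (s.filter (fun x => rnk s x / e = q)).card = (Finset.Ico (q*e) (q*e+e)).card := by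
    apply Finset.card_bij (fun x _ => rnk s x)
    · intro a ha
      simp only [mem_filter] at ha
      obtain ⟨has, hdiv⟩ := ha
      obtain ⟨B, hB, hEq⟩ : ∃ B, B < e ∧ rnk s a = q*e + B :=
        ⟨rnk s a % e, Nat.mod_lt _ he, by
          conv_lhs => rw [← Nat.div_add_mod (rnk s a) e]
          rw [hdiv]; ring⟩
      simp only [Finset.mem_Ico]
      omega
    · intro a ha b hb hab
      simp only [mem_filter] at ha hb
      exact rnk_inj ha.1 hb.1 hab
    · intro b hb
      simp only [Finset.mem_Ico] at hb
      have hbs : b < s.card := by omega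
      obtain ⟨x, hx, hrx⟩ := rnk_surj hbs
      refine ⟨x, ?_, hrx⟩
      simp only [mem_filter]
      have hq : b / e = q := Nat.div_eq_of_lt_le (by omega) (by simpa [Nat.succ_mul] using hb.2)
      exact ⟨hx, by rw [hrx]; exact hq⟩
  rw [this, Nat.card_Ico]; omega

lemma card_rnk_lt (s : Finset (Fin m)) {N : ℕ} (h : N ≤ s.card) :
    (s.filter (fun x => rnk s x < N)).card = N := by
  have : (s.filter (fun x => rnk s x < N)).card = (Finset.range N).card := by
    apply Finset.card_bij (fun x _ => rnk s x)
    · intro a ha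
      simp only [mem_filter] at ha
      simp [ha.2]
    · intro a ha b hb hab
      simp only [mem_filter] at ha hb
      exact rnk_inj ha.1 hb.1 hab
    · intro b hb
      simp only [Finset.mem_range] at hb
      obtain ⟨x, hx, hrx⟩ := rnk_surj (lt_of_lt_of_le hb h)
      exact ⟨x, by simp [mem_filter, hx, hrx, hb], hrx⟩
  rw [this, Finset.card_range]

/-- fibers of a block-index function -/
def fiber (f : Fin m → ℕ) (y : Fin m) : Finset (Fin m) :=
  univ.filter (fun z => f z = f y)

lemma mem_fiber_self (f : Fin m → ℕ) (y : Fin m) : y ∈ fiber f y := by simp [fiber]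

lemma fiber_congr {f : Fin m → ℕ} {y z : Fin m} (h : z ∈ fiber f y) :
    fiber f z = fiber f y := by
  simp only [fiber, mem_filter, mem_univ, true_and] at h ⊢
  ext w; simp [fiber, h]

end Aux
section Parts

open Finset
variable {m : ℕ}

lemma exists_partP {k1 e : ℕ} (he : 0 < e) (L : Fin k1 → Finset (Fin m))
    (hLcard : ∀ b, (L b).card = e)
    (hdisj : ∀ b b' x, x ∈ L b → x ∈ L b' → b = b')
    (hem : m % e = 0) (hk1e : k1 * e ≤ m) :
    ∃ f : Fin m → ℕ, (∀ y, (fiber f y).card = e) ∧ ∀ b y, y ∈ L b → fiber f y = L b := by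
  classical
  set R : Finset (Fin m) := univ.filter (fun x => ∀ b, x ∉ L b) with hR
  have hUcard : (univ.biUnion L).card = k1 * e := by
    rw [Finset.card_biUnion]
    · simp [hLcard, mul_comm]
    · intro b _ b' _ hbb'
      exact Finset.disjoint_left.mpr (fun x hx hx' => hbb' (hdisj _ _ _ hx hx'))
  have hRcard : R.card = m - k1 * e := by
    have : R = univ \ (univ.biUnion L) := by
      ext x; simp [hR]
    rw [this, Finset.card_sdiff_of_subset (Finset.subset_univ _), hUcard, Finset.card_univ,
      Fintype.card_fin]
  set f : Fin m → ℕ := fun x =>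
    if h : ∃ b, x ∈ L b then (h.choose : ℕ) else k1 + rnk R x / e with hf
  have hfL : ∀ (b : Fin k1) (x : Fin m), x ∈ L b → f x = b := by
    intro b x hx
    have h : ∃ b, x ∈ L b := ⟨b, hx⟩
    simp only [hf, dif_pos h]
    exact congrArg Fin.val (hdisj _ _ _ h.choose_spec hx)
  have hfR : ∀ x ∈ R, f x = k1 + rnk R x / e := by
    intro x hx
    have h : ¬ ∃ b, x ∈ L b := by
      simp only [hR, mem_filter] at hx
      rintro ⟨b, hb⟩; exact hx.2 b hb
    simp only [hf, dif_neg h]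
  have hmem : ∀ x : Fin m, (∃ b, x ∈ L b) ∨ x ∈ R := by
    intro x
    by_cases h : ∃ b, x ∈ L b
    · exact Or.inl h
    · exact Or.inr (by simp only [hR, mem_filter, mem_univ, true_and]; exact fun b hb => h ⟨b, hb⟩)
  have key : ∀ b y, y ∈ L b → fiber f y = L b := by
    intro b y hy
    ext z
    simp only [fiber, mem_filter, mem_univ, true_and]
    rw [hfL b y hy]
    constructor
    · intro hz
      rcases hmem z with ⟨b', hb'⟩ | hzR
      · rw [hfL b' z hb'] at hz
        rwa [Fin.val_injective hz] at hb'
      · rw [hfR z hzR] at hz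
        have h1 : k1 ≤ (b : ℕ) := hz ▸ Nat.le_add_right k1 _
        exact absurd b.isLt (by omega)
    · intro hz; rw [hfL b z hz]
  refine ⟨f, ?_, key⟩
  intro y
  rcases hmem y with ⟨b, hb⟩ | hyR
  · rw [key b y hb]; exact hLcard b
  · have hfy : f y = k1 + rnk R y / e := hfR y hyR
    set q := rnk R y / e with hq
    have hfib : fiber f y = R.filter (fun z => rnk R z / e = q) := by
      ext z
      simp only [fiber, mem_filter, mem_univ, true_and, hfy]
      constructor
      · intro hz
        rcases hmem z with ⟨b', hb'⟩ | hzR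
        · rw [hfL b' z hb'] at hz
          have h1 : k1 ≤ (b' : ℕ) := hz.symm ▸ Nat.le_add_right k1 _
          exact absurd b'.isLt (by omega)
        · rw [hfR z hzR] at hz
          exact ⟨hzR, by omega⟩
      · rintro ⟨hzR, hzq⟩
        rw [hfR z hzR, hzq]
    rw [hfib]
    apply card_rnk_fiber R he
    have hdvd : e ∣ R.card := by
      rw [hRcard]
      exact Nat.dvd_sub (Nat.dvd_of_mod_eq_zero hem) (dvd_mul_left e k1)
    obtain ⟨N, hN⟩ := hdvd
    have hNc : N * e = R.card := by rw [hN, mul_comm]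
    have h1 : q * e ≤ rnk R y := Nat.div_mul_le_self _ _
    have h2 : rnk R y < R.card := rnk_lt hyR
    have : q < N := by
      by_contra hqN
      push_neg at hqN
      have : N * e ≤ q * e := Nat.mul_le_mul_right e hqN
      omega
    calc (q + 1) * e ≤ N * e := Nat.mul_le_mul_right e (by omega)
    _ = R.card := hNc

lemma exists_partQ {e : ℕ} (he : 2 ≤ e) (W : Finset (Fin m))
    (hem : m % e = 0) (hW : m / e ≤ W.card) :
    ∃ f : Fin m → ℕ, (∀ y, (fiber f y).card = e) ∧ ∀ y, ∃ z ∈ fiber f y, z ∈ W := by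
  classical
  set N := m / e with hNdef
  have hNe : N * e = m := Nat.div_mul_cancel (Nat.dvd_of_mod_eq_zero hem)
  set W1 := W.filter (fun x => rnk W x < N) with hW1
  have hW1card : W1.card = N := card_rnk_lt W hW
  set R := univ \ W1 with hRdef
  have hRcard : R.card = N * (e - 1) := by
    rw [hRdef, Finset.card_sdiff_of_subset (Finset.subset_univ _), hW1card, Finset.card_univ,
      Fintype.card_fin]
    have : 0 < e := by omega
    -- m - N = N * (e-1)
    have : N * e = m := hNe
    cases e with
    | zero => omega
    | succ e' => simp [Nat.mul_succ] at this ⊢; omega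
  set f : Fin m → ℕ := fun x => if x ∈ W1 then rnk W x else rnk R x / (e - 1) with hf
  have he1 : 0 < e - 1 := by omega
  -- the unique W1 element of rank i
  have huniq : ∀ i < N, ∃! x, x ∈ W1 ∧ rnk W x = i := by
    intro i hi
    obtain ⟨x, hx, hrx⟩ := rnk_surj (lt_of_lt_of_le hi hW)
    refine ⟨x, ⟨by simp [hW1, mem_filter, hx, hrx, hi], hrx⟩, ?_⟩
    rintro y ⟨hy1, hy2⟩
    have hy : y ∈ W := (Finset.mem_filter.mp hy1).1
    exact rnk_inj hy hx (by omega)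
  have hfval : ∀ y : Fin m, f y < N := by
    intro y
    by_cases hy : y ∈ W1
    · simp only [hf, if_pos hy]
      exact (Finset.mem_filter.mp hy).2
    · simp only [hf, if_neg hy]
      have hyR : y ∈ R := by simp [hRdef, hy]
      have := rnk_lt hyR
      rw [hRcard] at this
      exact Nat.div_lt_of_lt_mul (by rw [Nat.mul_comm]; omega)
  have hfib : ∀ y : Fin m, fiber f y =
      (W1.filter (fun x => rnk W x = f y)) ∪ (R.filter (fun z => rnk R z / (e-1) = f y)) := by
    intro y
    ext z
    simp only [fiber, mem_filter, mem_univ, true_and, Finset.mem_union, mem_filter]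
    constructor
    · intro hz
      by_cases hzW : z ∈ W1
      · left; refine ⟨hzW, ?_⟩; rw [← hz]; simp [hf, if_pos hzW]
      · right
        refine ⟨by simp [hRdef, hzW], ?_⟩
        rw [← hz]; simp [hf, if_neg hzW]
    · rintro (⟨hz1, hz2⟩ | ⟨hz1, hz2⟩)
      · rw [hf]; simp only [if_pos hz1]; exact hz2
      · have hzW : z ∉ W1 := by
          rw [hRdef] at hz1; exact (Finset.mem_sdiff.mp hz1).2
        rw [hf]; simp only [if_neg hzW]; exact hz2
  refine ⟨f, ?_, ?_⟩
  · intro y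
    rw [hfib y]
    rw [Finset.card_union_of_disjoint]
    · have h1 : (W1.filter (fun x => rnk W x = f y)).card = 1 := by
        obtain ⟨x, hx, hxu⟩ := huniq (f y) (hfval y)
        rw [Finset.card_eq_one]
        refine ⟨x, ?_⟩
        ext z
        simp only [mem_filter, Finset.mem_singleton]
        constructor
        · intro hz; exact hxu z hz
        · intro hz; subst hz; exact hx
      have h2 : (R.filter (fun z => rnk R z / (e-1) = f y)).card = e - 1 := by
        apply card_rnk_fiber R he1
        rw [hRcard]
        exact Nat.mul_le_mul_right _ (hfval y)
      omega
    · apply Finset.disjoint_left.mpr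
      intro a ha ha'
      have h1 := (Finset.mem_filter.mp ha).1
      have h2 := (Finset.mem_filter.mp ha').1
      rw [hRdef] at h2
      exact (Finset.mem_sdiff.mp h2).2 h1
  · intro y
    obtain ⟨x, ⟨hx1, hx2⟩, _⟩ := huniq (f y) (hfval y)
    refine ⟨x, ?_, (Finset.mem_filter.mp hx1).1⟩
    rw [hfib y]
    exact Finset.mem_union_left _ (by simp [mem_filter, hx1, hx2])

end Parts
section Iot
open Finset

/-- the injection `Fin (k-1) → Fin k` missing the value `j`. -/
def iot (k : ℕ) (j : Fin k) (t : Fin (k - 1)) : Fin k :=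
  if (t : ℕ) < (j : ℕ) then ⟨t, by omega⟩ else ⟨t + 1, by have := t.isLt; omega⟩

lemma iot_ne {k : ℕ} (j : Fin k) (t : Fin (k - 1)) : iot k j t ≠ j := by
  unfold iot
  split <;> (intro h; rw [Fin.ext_iff] at h; simp at h; omega)

lemma iot_inj {k : ℕ} {j : Fin k} {t t' : Fin (k - 1)} (h : iot k j t = iot k j t') :
    t = t' := by
  unfold iot at h
  rw [Fin.ext_iff] at h ⊢
  split at h <;> split at h <;> simp_all <;> omega

lemma iot_surj {k : ℕ} (j v : Fin k) (hv : v ≠ j) : ∃ t, iot k j t = v := by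
  have hvj : (v : ℕ) ≠ (j : ℕ) := fun h => hv (Fin.ext h)
  by_cases h : (v : ℕ) < (j : ℕ)
  · have hj := j.isLt
    refine ⟨⟨v, by omega⟩, ?_⟩
    unfold iot
    rw [if_pos (by simpa using h)]
  · have hv' := v.isLt
    refine ⟨⟨(v : ℕ) - 1, by omega⟩, ?_⟩
    unfold iot
    rw [if_neg (by simp; omega)]
    exact Fin.ext (by simp; omega)

end Iot

section Emb
open Finset

def emb (k m : ℕ) (j : Fin k) (x : Fin m) : Fin (k * m) := finProdFinEquiv (j, x)

lemma emb_inj {k m : ℕ} {j j' : Fin k} {x x' : Fin m}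
    (h : emb k m j x = emb k m j' x') : j = j' ∧ x = x' := by
  have := finProdFinEquiv.injective h
  exact ⟨congrArg Prod.fst this, congrArg Prod.snd this⟩

lemma emb_inj' {k m : ℕ} (j : Fin k) : Function.Injective (emb k m j) :=
  fun _ _ h => (emb_inj h).2

lemma estar_ext {n e : ℕ} {a b : EStar n e} (h1 : a.centre = b.centre)
    (h2 : a.leaves = b.leaves) : a = b := by
  cases a; cases b
  cases h1; cases h2; rfl

def embedStar {m e : ℕ} (k : ℕ) (j : Fin k) (S : EStar m e) : EStar (k * m) e where
  centre := emb k m j S.centre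
  leaves := S.leaves.image (emb k m j)
  card_leaves := by rw [Finset.card_image_of_injective _ (emb_inj' j)]; exact S.card_leaves
  centre_not_leaf := by
    rw [Finset.mem_image]
    rintro ⟨a, ha, hEq⟩
    exact S.centre_not_leaf ((emb_inj hEq).2 ▸ ha)

lemma mem_edges_embedStar {m e k : ℕ} {j : Fin k} {S : EStar m e} {p : Sym2 (Fin (k * m))} :
    p ∈ (embedStar k j S).edges ↔ ∃ a ∈ S.leaves, p = s(emb k m j S.centre, emb k m j a) := by
  simp only [EStar.edges, embedStar, Finset.mem_image]
  constructor
  · rintro ⟨a', ⟨a, ha, rfl⟩, rfl⟩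
    exact ⟨a, ha, rfl⟩
  · rintro ⟨a, ha, rfl⟩
    exact ⟨emb k m j a, ⟨a, ha, rfl⟩, rfl⟩

end Emb

section Cross
open Finset

def crossStar (k m e : ℕ) (j j' : Fin k) (x : Fin m) (B : Finset (Fin m))
    (hB : B.card = e) (hne : j ≠ j') : EStar (k * m) e where
  centre := emb k m j x
  leaves := B.image (emb k m j')
  card_leaves := by rw [Finset.card_image_of_injective _ (emb_inj' j')]; exact hB
  centre_not_leaf := by
    rw [Finset.mem_image]
    rintro ⟨z, hz, hEq⟩
    exact hne ((emb_inj hEq).1).symm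

lemma mem_edges_crossStar {k m e : ℕ} {j j' : Fin k} {x : Fin m} {B : Finset (Fin m)}
    {hB : B.card = e} {hne : j ≠ j'} {p : Sym2 (Fin (k * m))} :
    p ∈ (crossStar k m e j j' x B hB hne).edges ↔
      ∃ z ∈ B, p = s(emb k m j x, emb k m j' z) := by
  simp only [EStar.edges, crossStar, Finset.mem_image]
  constructor
  · rintro ⟨a', ⟨z, hz, rfl⟩, rfl⟩
    exact ⟨z, hz, rfl⟩
  · rintro ⟨z, hz, rfl⟩
    exact ⟨emb k m j' z, ⟨z, hz, rfl⟩, rfl⟩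

lemma sym2_map_emb {k m : ℕ} (j : Fin k) {x y a b : Fin m} (h : s(x, y) = s(a, b)) :
    s(emb k m j x, emb k m j y) = s(emb k m j a, emb k m j b) := by
  rw [Sym2.eq_iff] at h ⊢
  rcases h with ⟨rfl, rfl⟩ | ⟨rfl, rfl⟩
  · left; exact ⟨rfl, rfl⟩
  · right; exact ⟨rfl, rfl⟩

end Cross
/-- From a strongly equitable uniquely `(k-1)`-chromatic `e`-star system of order
`m ≡ 0 (mod 2e)` with colour classes of size `r > e`, one obtains a strongly equitable
`k`-chromatic `e`-star system of order `k·m` with colour classes of size `(k-1)r`. -/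
theorem stmt16 (k e m r : ℕ) (hk : 3 ≤ k) (he : 3 ≤ e) (hr : e < r)
    (hmod : m % (2 * e) = 0)
    (sys : EStarSystem m e)
    (hchr : Chromatic sys (k - 1)) (huniq : UniquelyColourable sys (k - 1))
    (hc : ∃ c : Fin m → Fin (k - 1), IsWeakColouring sys c ∧
      ∀ i : Fin (k - 1), classCard c i = r) :
    ∃ sys' : EStarSystem (k * m) e, Chromatic sys' k ∧
      ∃ c' : Fin (k * m) → Fin k, IsWeakColouring sys' c' ∧
        ∀ i : Fin k, classCard c' i = (k - 1) * r := by
  classical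
  obtain ⟨c, hcweak, hcsize⟩ := hc
  haveI : NeZero k := ⟨by omega⟩
  haveI : NeZero (k - 1) := ⟨by omega⟩
  have he0 : 0 < e := by omega
  have hme : m % e = 0 := by
    have h2e : 2 * e ∣ m := Nat.dvd_of_mod_eq_zero hmod
    have hem : e ∣ m := dvd_trans (dvd_mul_left e 2) h2e
    omega
  have hm_eq : m = (k - 1) * r := by
    have h1 : (Finset.univ : Finset (Fin m)).card =
        ∑ i : Fin (k - 1), (Finset.univ.filter (fun v => c v = i)).card :=
      Finset.card_eq_sum_card_fiberwise (fun x _ => Finset.mem_univ (c x))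
    have h2 : ∀ i : Fin (k - 1), (Finset.univ.filter (fun v => c v = i)).card = r :=
      fun i => hcsize i
    simp only [h2, Finset.sum_const, Finset.card_univ, Fintype.card_fin, smul_eq_mul,
      Finset.card_fin] at h1
    exact h1
  have hm0 : 0 < m := by
    rw [hm_eq]; exact Nat.mul_pos (by omega) (by omega)
  set C : Fin (k - 1) → Finset (Fin m) := fun b => Finset.univ.filter (fun x => c x = b)
    with hC
  have hCcard : ∀ b, (C b).card = r := fun b => hcsize b
  have hLex : ∀ b, ∃ t ⊆ C b, t.card = e :=
    fun b => Finset.exists_subset_card_eq (by rw [hCcard]; omega)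
  choose L hLsub hLcard using hLex
  have hLC : ∀ b x, x ∈ L b → c x = b := fun b x hx =>
    (Finset.mem_filter.mp (hLsub b hx)).2
  have hLdisj : ∀ b b' x, x ∈ L b → x ∈ L b' → b = b' := fun b b' x hb hb' =>
    (hLC b x hb) ▸ (hLC b' x hb') ▸ rfl
  obtain ⟨fP, hfPcard, hfPL⟩ := exists_partP he0 L hLcard hLdisj hme
    (by rw [hm_eq]; exact Nat.mul_le_mul_left _ (le_of_lt hr))
  have hQex : ∀ a : Fin (k - 1), ∃ f : Fin m → ℕ, (∀ y, (fiber f y).card = e) ∧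
      ∀ y, ∃ z ∈ fiber f y, c z ≠ a := by
    intro a
    set W : Finset (Fin m) := Finset.univ.filter (fun x => ¬ c x = a) with hW
    have hWcard : m / e ≤ W.card := by
      have h1 : W.card = m - r := by
        have h2 : (Finset.univ.filter (fun x => c x = a)).card = r := hcsize a
        have h3 : W = Finset.univ \ (Finset.univ.filter (fun x => c x = a)) := by
          ext x; simp [hW]
        rw [h3, Finset.card_sdiff_of_subset (Finset.filter_subset _ _), Finset.card_univ,
          Fintype.card_fin, h2]
      have hk2 : k - 1 = (k - 2) + 1 := by omega
      have hsub : m - r = (k - 2) * r := by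
        rw [hm_eq, hk2]; ring_nf; omega
      have hNle : (m / e) * e ≤ (k - 2) * r * e := by
        have hNm : m / e * e = m := Nat.div_mul_cancel (Nat.dvd_of_mod_eq_zero hme)
        rw [hNm, hm_eq, hk2]
        calc ((k-2) + 1) * r ≤ ((k - 2) * e) * r := by
              apply Nat.mul_le_mul_right
              have : 1 ≤ k - 2 := by omega
              nlinarith
        _ = (k - 2) * r * e := by ring
      have := Nat.le_of_mul_le_mul_right hNle he0
      omega
    obtain ⟨f, h1, h2⟩ := exists_partQ (by omega) W hme hWcard
    refine ⟨f, h1, fun y => ?_⟩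
    obtain ⟨z, hz1, hz2⟩ := h2 y
    exact ⟨z, hz1, (Finset.mem_filter.mp hz2).2⟩
  choose fQ hfQcard hfQW using hQex
  set F : Fin k → Fin k → Fin m → (Fin m → ℕ) := fun j j' x =>
    if h : iot k j (c x) = j' then fP
    else fQ (iot_surj j' (iot k j (c x)) h).choose with hF
  have hFcard : ∀ j j' x y, (fiber (F j j' x) y).card = e := by
    intro j j' x y
    rw [hF]; dsimp only; split
    · exact hfPcard y
    · exact hfQcard _ y
  set copyStars : Finset (EStar (k * m) e) :=
    (Finset.univ ×ˢ sys.stars).image (fun p => embedStar k p.1 p.2) with hCopy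
  set T : Finset (Fin k × Fin k × Fin m × Fin m) :=
    Finset.univ.filter (fun q => q.1 < q.2.1) with hT
  have hTlt : ∀ q ∈ T, q.1 ≠ q.2.1 := by
    intro q hq
    exact ne_of_lt (Finset.mem_filter.mp hq).2
  set crossStars : Finset (EStar (k * m) e) :=
    T.attach.image (fun q => crossStar k m e q.1.1 q.1.2.1 q.1.2.2.1
      (fiber (F q.1.1 q.1.2.1 q.1.2.2.1) q.1.2.2.2) (hFcard _ _ _ _) (hTlt q.1 q.2))
    with hCross
  -- the colouring
  set c' : Fin (k * m) → Fin k := fun v =>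
    iot k (finProdFinEquiv.symm v).1 (c (finProdFinEquiv.symm v).2) with hc'
  have hc'emb : ∀ (j : Fin k) (x : Fin m), c' (emb k m j x) = iot k j (c x) := by
    intro j x
    simp only [hc', emb, Equiv.symm_apply_apply]
  -- partition property
  have crossCase : ∀ (j j' : Fin k) (x y : Fin m), j < j' →
      ∃! S, S ∈ copyStars ∪ crossStars ∧ s(emb k m j x, emb k m j' y) ∈ S.edges := by
    intro j j' x y hlt
    have hqT : ((j, j', x, y) : Fin k × Fin k × Fin m × Fin m) ∈ T := by
      simp only [hT, Finset.mem_filter, Finset.mem_univ, true_and]; exact hlt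
    refine ⟨crossStar k m e j j' x (fiber (F j j' x) y) (hFcard _ _ _ _)
      (hTlt _ hqT), ⟨Finset.mem_union_right _ ?_, ?_⟩, ?_⟩
    · exact Finset.mem_image.mpr ⟨⟨(j, j', x, y), hqT⟩, Finset.mem_attach _ _, rfl⟩
    · exact mem_edges_crossStar.mpr ⟨y, mem_fiber_self _ _, rfl⟩
    · rintro S' ⟨hS'mem, hS'edge⟩
      rcases Finset.mem_union.mp hS'mem with hcop | hcro
      · obtain ⟨⟨i, S⟩, hiS, rfl⟩ := Finset.mem_image.mp hcop
        obtain ⟨a, ha, hpe⟩ := mem_edges_embedStar.mp hS'edge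
        rw [Sym2.eq_iff] at hpe
        rcases hpe with ⟨h1, h2⟩ | ⟨h1, h2⟩ <;>
          exact absurd ((emb_inj h1).1.trans (emb_inj h2).1.symm) (ne_of_lt hlt)
      · obtain ⟨⟨⟨i, i', z', y'⟩, hq⟩, -, rfl⟩ := Finset.mem_image.mp hcro
        dsimp only at hS'edge ⊢
        obtain ⟨z, hz, hpe⟩ := mem_edges_crossStar.mp hS'edge
        have hii : i < i' := (Finset.mem_filter.mp hq).2
        rw [Sym2.eq_iff] at hpe
        rcases hpe with ⟨h1, h2⟩ | ⟨h1, h2⟩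
        · obtain ⟨h3, h4⟩ := emb_inj h1
          obtain ⟨h5, h6⟩ := emb_inj h2
          subst h3; subst h4; subst h5; subst h6
          exact estar_ext rfl
            (congrArg (fun B : Finset (Fin m) => Finset.image (emb k m j') B)
              (fiber_congr hz).symm)
        · have e1 := (emb_inj h1).1
          have e2 := (emb_inj h2).1
          rw [← e1, ← e2] at hii
          exact absurd hii (lt_asymm hlt)
  have hpart : ∀ p : Sym2 (Fin (k * m)), ¬ p.IsDiag →
      ∃! S, S ∈ copyStars ∪ crossStars ∧ p ∈ EStar.edges S := by
    intro p
    induction p using Sym2.ind with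
    | _ u w =>
    intro hdiag
    rw [Sym2.mk_isDiag_iff] at hdiag
    obtain ⟨⟨ju, xu⟩, rfl⟩ : ∃ q : Fin k × Fin m, u = emb k m q.1 q.2 :=
      ⟨finProdFinEquiv.symm u, (finProdFinEquiv.apply_symm_apply u).symm⟩
    obtain ⟨⟨jw, xw⟩, rfl⟩ : ∃ q : Fin k × Fin m, w = emb k m q.1 q.2 :=
      ⟨finProdFinEquiv.symm w, (finProdFinEquiv.apply_symm_apply w).symm⟩
    rcases eq_or_ne ju jw with rfl | hjj
    · -- same copy
      have hxx : xu ≠ xw := fun h => hdiag (by rw [h])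
      have hdiag2 : ¬ (s(xu, xw) : Sym2 (Fin m)).IsDiag := by
        rw [Sym2.mk_isDiag_iff]; exact hxx
      obtain ⟨S0, ⟨hS0mem, hS0edge⟩, hS0uniq⟩ := sys.partition _ hdiag2
      refine ⟨embedStar k ju S0, ⟨Finset.mem_union_left _ ?_, ?_⟩, ?_⟩
      · exact Finset.mem_image.mpr ⟨(ju, S0),
          Finset.mem_product.mpr ⟨Finset.mem_univ _, hS0mem⟩, rfl⟩
      · rw [mem_edges_embedStar]
        obtain ⟨a, ha, hpe⟩ := Finset.mem_image.mp hS0edge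
        exact ⟨a, ha, (sym2_map_emb ju hpe.symm)⟩
      · rintro S' ⟨hS'mem, hS'edge⟩
        rcases Finset.mem_union.mp hS'mem with hcop | hcro
        · obtain ⟨⟨i, S⟩, hiS, rfl⟩ := Finset.mem_image.mp hcop
          obtain ⟨a, ha, hpe⟩ := mem_edges_embedStar.mp hS'edge
          have hSmem : S ∈ sys.stars := (Finset.mem_product.mp hiS).2
          rw [Sym2.eq_iff] at hpe
          rcases hpe with ⟨h1, h2⟩ | ⟨h1, h2⟩
          · obtain ⟨h3, h4⟩ := emb_inj h1
            obtain ⟨h5, h6⟩ := emb_inj h2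
            subst h3
            have hedge : s(xu, xw) ∈ S.edges := Finset.mem_image.mpr
              ⟨a, ha, by rw [Sym2.eq_iff]; exact Or.inl ⟨h4.symm, h6.symm⟩⟩
            rw [hS0uniq S ⟨hSmem, hedge⟩]
          · obtain ⟨h3, h4⟩ := emb_inj h1
            obtain ⟨h5, h6⟩ := emb_inj h2
            subst h3
            have hedge : s(xu, xw) ∈ S.edges := Finset.mem_image.mpr
              ⟨a, ha, by rw [Sym2.eq_iff]; exact Or.inr ⟨h6.symm, h4.symm⟩⟩
            rw [hS0uniq S ⟨hSmem, hedge⟩]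
        · obtain ⟨⟨⟨i, i', z', y'⟩, hq⟩, -, rfl⟩ := Finset.mem_image.mp hcro
          dsimp only at hS'edge ⊢
          obtain ⟨z, hz, hpe⟩ := mem_edges_crossStar.mp hS'edge
          have hii : i < i' := (Finset.mem_filter.mp hq).2
          rw [Sym2.eq_iff] at hpe
          exfalso
          rcases hpe with ⟨h1, h2⟩ | ⟨h1, h2⟩
          · have e1 := (emb_inj h1).1
            have e2 := (emb_inj h2).1
            rw [← e1, ← e2] at hii
            exact lt_irrefl _ hii
          · have e1 := (emb_inj h1).1
            have e2 := (emb_inj h2).1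
            rw [← e1, ← e2] at hii
            exact lt_irrefl _ hii
    · rcases lt_or_gt_of_ne hjj with hlt | hgt
      · exact crossCase ju jw xu xw hlt
      · rw [show (s(emb k m ju xu, emb k m jw xw)) = s(emb k m jw xw, emb k m ju xu) from
          Sym2.eq_swap]
        exact crossCase jw ju xw xu hgt
  set sys' : EStarSystem (k * m) e := ⟨copyStars ∪ crossStars, hpart⟩ with hsys'
  have hF1 : ∀ (j j' : Fin k) (x : Fin m), iot k j (c x) = j' → F j j' x = fP := by
    intro j j' x h; rw [hF]; exact dif_pos h
  have hF2 : ∀ (j j' : Fin k) (x : Fin m) (h : ¬ iot k j (c x) = j'),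
      F j j' x = fQ (iot_surj j' (iot k j (c x)) h).choose := by
    intro j j' x h; rw [hF]; exact dif_neg h
  have hweak : IsWeakColouring sys' c' := by
    intro S hS
    rcases Finset.mem_union.mp hS with hcop | hcro
    · obtain ⟨⟨j, S0⟩, hmem, rfl⟩ := Finset.mem_image.mp hcop
      obtain ⟨a, ha, hane⟩ := hcweak S0 (Finset.mem_product.mp hmem).2
      refine ⟨emb k m j a, Finset.mem_image.mpr ⟨a, ha, rfl⟩, ?_⟩
      show c' (emb k m j a) ≠ c' (emb k m j S0.centre)
      rw [hc'emb, hc'emb]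
      exact fun h => hane (iot_inj h)
    · obtain ⟨⟨⟨j, j', x, y⟩, hq⟩, -, rfl⟩ := Finset.mem_image.mp hcro
      dsimp only
      by_cases h : iot k j (c x) = j'
      · refine ⟨emb k m j' y, Finset.mem_image.mpr ⟨y, mem_fiber_self _ _, rfl⟩, ?_⟩
        show c' (emb k m j' y) ≠ c' (emb k m j x)
        rw [hc'emb, hc'emb, h]
        exact iot_ne j' (c y)
      · obtain ⟨z, hz, hcz⟩ := hfQW (iot_surj j' (iot k j (c x)) h).choose y
        refine ⟨emb k m j' z, Finset.mem_image.mpr ⟨z, ?_, rfl⟩, ?_⟩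
        · rw [hF2 j j' x h]; exact hz
        · show c' (emb k m j' z) ≠ c' (emb k m j x)
          rw [hc'emb, hc'emb]
          rw [← (iot_surj j' (iot k j (c x)) h).choose_spec]
          exact fun hcontr => hcz (iot_inj hcontr)
  have hnocol : ¬ Colourable sys' (k - 1) := by
    rintro ⟨c₁, hc₁⟩
    set d : Fin k → Fin m → Fin (k - 1) := fun j x => c₁ (emb k m j x) with hd
    have hdweak : ∀ j : Fin k, IsWeakColouring sys (d j) := by
      intro j S hS
      obtain ⟨a', ha', hne⟩ := hc₁ (embedStar k j S)
        (Finset.mem_union_left _ (Finset.mem_image.mpr ⟨(j, S),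
          Finset.mem_product.mpr ⟨Finset.mem_univ _, hS⟩, rfl⟩))
      obtain ⟨a, ha, rfl⟩ := Finset.mem_image.mp ha'
      exact ⟨a, ha, hne⟩
    obtain ⟨π₀, hπ₀⟩ := huniq c (d 0) hcweak (hdweak 0)
    obtain ⟨π₁, hπ₁⟩ := huniq c (d 1) hcweak (hdweak 1)
    have hC0 : (0:ℕ) < (C 0).card := by rw [hCcard 0]; omega
    obtain ⟨x₀, hx₀⟩ := Finset.card_pos.mp hC0
    have hcx₀ : c x₀ = 0 := (Finset.mem_filter.mp hx₀).2
    set b : Fin (k - 1) := π₁.symm (π₀ 0) with hb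
    have hLb : (0:ℕ) < (L b).card := by rw [hLcard b]; omega
    obtain ⟨y₀, hy₀⟩ := Finset.card_pos.mp hLb
    have hone : ((1 : Fin k) : ℕ) = 1 := by
      rw [Fin.val_one']; exact Nat.mod_eq_of_lt (by omega)
    have h01 : (0 : Fin k) < 1 := by
      rw [Fin.lt_def, hone]; simp
    have hq01 : ((0, 1, x₀, y₀) : Fin k × Fin k × Fin m × Fin m) ∈ T := by
      simp only [hT, Finset.mem_filter, Finset.mem_univ, true_and]; exact h01
    have hio : iot k 0 (c x₀) = (1 : Fin k) := by
      rw [hcx₀]; unfold iot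
      rw [if_neg (by simp)]
      exact Fin.ext (by rw [hone]; simp)
    have hfibL : fiber (F 0 1 x₀) y₀ = L b := by
      rw [hF1 _ _ _ hio]; exact hfPL b y₀ hy₀
    obtain ⟨a', ha', hne⟩ := hc₁
      (crossStar k m e 0 1 x₀ (fiber (F 0 1 x₀) y₀) (hFcard _ _ _ _) (hTlt _ hq01))
      (Finset.mem_union_right _ (Finset.mem_image.mpr
        ⟨⟨(0, 1, x₀, y₀), hq01⟩, Finset.mem_attach _ _, rfl⟩))
    obtain ⟨z, hz, rfl⟩ := Finset.mem_image.mp ha'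
    rw [hfibL] at hz
    have hcz : c z = b := hLC b z hz
    apply hne
    show c₁ (emb k m 1 z) = c₁ (emb k m 0 x₀)
    have hcol1 : c₁ (emb k m 1 z) = π₁ (c z) := by
      rw [show c₁ (emb k m 1 z) = d 1 z from rfl, hπ₁]; rfl
    have hcol0 : c₁ (emb k m 0 x₀) = π₀ (c x₀) := by
      rw [show c₁ (emb k m 0 x₀) = d 0 x₀ from rfl, hπ₀]; rfl
    rw [hcol1, hcol0, hcz, hcx₀, hb]
    simp
  have hsizes : ∀ i : Fin k, classCard c' i = (k - 1) * r := by
    intro i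
    have hbij : classCard c' i =
        ((Finset.univ : Finset (Fin k × Fin m)).filter
          (fun q => iot k q.1 (c q.2) = i)).card := by
      unfold classCard
      apply Finset.card_bij (fun v _ => finProdFinEquiv.symm v)
      · intro v hv
        simp only [Finset.mem_filter, Finset.mem_univ, true_and] at hv ⊢
        rw [← hv]
      · intro a _ b _ hab; exact finProdFinEquiv.symm.injective hab
      · intro q hq
        refine ⟨finProdFinEquiv q, ?_, by simp⟩
        simp only [Finset.mem_filter, Finset.mem_univ, true_and] at hq ⊢
        rw [hc']
        simpa [Equiv.symm_apply_apply] using hq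
    rw [hbij]
    rw [Finset.card_eq_sum_card_fiberwise (f := fun q : Fin k × Fin m => q.1)
      (t := Finset.univ) (fun q _ => Finset.mem_univ _)]
    have hfib : ∀ j : Fin k,
        (((Finset.univ : Finset (Fin k × Fin m)).filter
          (fun q => iot k q.1 (c q.2) = i)).filter (fun q => q.1 = j)).card
          = if j = i then 0 else r := by
      intro j
      split_ifs with hji
      · subst hji
        rw [Finset.card_eq_zero, Finset.filter_eq_empty_iff]
        rintro ⟨j', x⟩ hq
        simp only [Finset.mem_filter, Finset.mem_univ, true_and] at hq
        rintro rfl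
        exact iot_ne j' (c x) hq
      · obtain ⟨t, ht⟩ := iot_surj j i (Ne.symm hji)
        have hset : (((Finset.univ : Finset (Fin k × Fin m)).filter
            (fun q => iot k q.1 (c q.2) = i)).filter (fun q => q.1 = j))
            = (C t).image (fun x => (j, x)) := by
          ext ⟨j', x⟩
          simp only [Finset.mem_filter, Finset.mem_univ, true_and, Finset.mem_image]
          constructor
          · rintro ⟨h1, rfl⟩
            refine ⟨x, ?_, rfl⟩
            have hcxt : c x = t := iot_inj (by rw [ht]; exact h1)
            simp [hC, hcxt]
          · rintro ⟨x', hx', hEq⟩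
            injection hEq with h1 h2
            have hcx : c x' = t := (Finset.mem_filter.mp hx').2
            refine ⟨?_, h1.symm⟩
            rw [← h1, ← h2, hcx]
            exact ht
        rw [hset, Finset.card_image_of_injective _ (fun a b h => congrArg Prod.snd h),
          hCcard]
    rw [Finset.sum_congr rfl (fun j _ => hfib j)]
    rw [Finset.sum_ite, Finset.sum_const, Finset.sum_const]
    have hcard : ((Finset.univ : Finset (Fin k)).filter (fun j => ¬ j = i)).card = k - 1 := by
      have : (Finset.univ : Finset (Fin k)).filter (fun j => ¬ j = i)
          = Finset.univ.erase i := by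
        ext j; simp [Finset.mem_erase, and_comm]
      rw [this, Finset.card_erase_of_mem (Finset.mem_univ _), Finset.card_univ,
        Fintype.card_fin]
    rw [hcard]
    simp
  exact ⟨sys', ⟨⟨c', hweak⟩, hnocol⟩, c', hweak, hsizes⟩
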